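/- Let X be a proper δ-hyperbolic geodesic space with Gromov boundary ∂X, and let γ be a bi-infinite (λ,ε)-quasi-geodesic with endpoints γ(±∞) ∈ ∂X. Fix r > D, where D = D(λ,ε,δ) is the Morse constant (the Hausdorff distance bound between γ and any geodesic with the same endpoints). For a connected component U of the set A = {x ∈ X : d(x, γ) ≥ r}, define its shadow 𝒮(U) ⊆ ∂X to be the set of boundary points p such that every geodesic ray from a fixed basepoint v ∈ γ to p eventually lies in U. Then the shadows of distinct components are disjoint, and the union of all shadows equals ∂X \ {γ(+∞), γ(−∞)}. -/
import Mathlib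


/-- `f` restricted to `[a,b]` is a geodesic from `x` to `y`. -/
def GeodesicFrom {X : Type*} [MetricSpace X] (f : ℝ → X) (a b : ℝ) (x y : X) : Prop :=
  a ≤ b ∧ f a = x ∧ f b = y ∧
    ∀ s ∈ Set.Icc a b, ∀ t ∈ Set.Icc a b, dist (f s) (f t) = |s - t|

/-- A geodesic metric space: any two points are joined by a geodesic. -/
def GeodesicSpace (X : Type*) [MetricSpace X] : Prop :=
  ∀ x y : X, ∃ (f : ℝ → X) (a b : ℝ), GeodesicFrom f a b x y

/-- `δ`-hyperbolicity via slim triangles. -/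
def SlimTriangles (X : Type*) [MetricSpace X] (δ : ℝ) : Prop :=
  ∀ (x y z : X) (f : ℝ → X) (a b : ℝ) (g : ℝ → X) (c d : ℝ) (h : ℝ → X) (e e' : ℝ),
    GeodesicFrom f a b x y → GeodesicFrom g c d y z → GeodesicFrom h e e' x z →
    (∀ s ∈ Set.Icc a b, ∃ p ∈ g '' Set.Icc c d ∪ h '' Set.Icc e e', dist (f s) p ≤ δ) ∧
    (∀ s ∈ Set.Icc c d, ∃ p ∈ f '' Set.Icc a b ∪ h '' Set.Icc e e', dist (g s) p ≤ δ) ∧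
    (∀ s ∈ Set.Icc e e', ∃ p ∈ f '' Set.Icc a b ∪ g '' Set.Icc c d, dist (h s) p ≤ δ)

/-- `f` is a geodesic ray starting at `v`. -/
def IsGeodesicRayFrom {X : Type*} [MetricSpace X] (v : X) (f : ℝ → X) : Prop :=
  f 0 = v ∧ ∀ s t : ℝ, 0 ≤ s → 0 ≤ t → dist (f s) (f t) = |s - t|

/-- The set of points at distance at least `r` from (the image of) `γ`. -/
def farSet {X : Type*} [MetricSpace X] (γ : ℝ → X) (r : ℝ) : Set X :=
  {x | r ≤ Metric.infDist x (Set.range γ)}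

/-- The shadow of a set `U ⊆ X` on the boundary: those boundary points all of whose
geodesic-ray representatives from `v` eventually lie in `U`. -/
def shadow {X Bd : Type*} [MetricSpace X] (v : X) (ept : (ℝ → X) → Bd)
    (U : Set X) : Set Bd :=
  {p | ∀ α : ℝ → X, IsGeodesicRayFrom v α → ept α = p → ∃ t₀ : ℝ, ∀ t ≥ t₀, α t ∈ U}

namespace GeodesicFrom

variable {X : Type*} [MetricSpace X] {f : ℝ → X} {a b : ℝ} {x y : X}

lemma dist_xy (h : GeodesicFrom f a b x y) : dist x y = b - a := by
  obtain ⟨hab, hfa, hfb, hd⟩ := h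
  rw [← hfa, ← hfb, hd a ⟨le_refl a, hab⟩ b ⟨hab, le_refl b⟩, abs_of_nonpos (by linarith)]
  ring

lemma rev (h : GeodesicFrom f a b x y) : GeodesicFrom (fun t => f (a + b - t)) a b y x := by
  obtain ⟨hab, hfa, hfb, hd⟩ := h
  refine ⟨hab, by simpa using hfb, by simpa using hfa, ?_⟩
  intro s hs t ht
  have h1 : a + b - s ∈ Set.Icc a b := ⟨by linarith [hs.2], by linarith [hs.1]⟩
  have h2 : a + b - t ∈ Set.Icc a b := ⟨by linarith [ht.2], by linarith [ht.1]⟩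
  rw [hd _ h1 _ h2]
  rw [abs_sub_comm]
  congr 1
  ring

lemma dist_left (h : GeodesicFrom f a b x y) {q : X} (hq : q ∈ f '' Set.Icc a b) :
    dist q x ≤ dist x y := by
  obtain ⟨w, hw, rfl⟩ := hq
  obtain ⟨hab, hfa, hfb, hd⟩ := h
  subst hfa; subst hfb
  have h1 := hd w hw a ⟨le_refl a, hab⟩
  have h2 : dist (f a) (f b) = b - a := dist_xy ⟨hab, rfl, rfl, hd⟩
  rw [h1, abs_of_nonneg (by linarith [hw.1]), h2]
  linarith [hw.2]

lemma dist_right (h : GeodesicFrom f a b x y) {q : X} (hq : q ∈ f '' Set.Icc a b) :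
    dist q y ≤ dist x y := by
  obtain ⟨w, hw, rfl⟩ := hq
  obtain ⟨hab, hfa, hfb, hd⟩ := h
  subst hfa; subst hfb
  have h1 := hd w hw b ⟨hab, le_refl b⟩
  have h2 : dist (f a) (f b) = b - a := dist_xy ⟨hab, rfl, rfl, hd⟩
  rw [h1, abs_of_nonpos (by linarith [hw.2]), h2]
  linarith [hw.1]

lemma isPreconnected_image (h : GeodesicFrom f a b x y) :
    IsPreconnected (f '' Set.Icc a b) := by
  apply IsPreconnected.image isPreconnected_Icc
  have : LipschitzOnWith 1 f (Set.Icc a b) := by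
    apply LipschitzOnWith.of_dist_le_mul
    intro s hs t ht
    rw [h.2.2.2 s hs t ht]
    have : dist s t = |s - t| := Real.dist_eq s t
    rw [this]
    simp
  exact this.continuousOn

end GeodesicFrom

lemma ray_seg {X : Type*} [MetricSpace X] {v : X} {α : ℝ → X}
    (hα : IsGeodesicRayFrom v α) {c d : ℝ} (hc : 0 ≤ c) (hcd : c ≤ d) :
    GeodesicFrom α c d (α c) (α d) :=
  ⟨hcd, rfl, rfl, fun s hs t ht => hα.2 s t (hc.trans hs.1) (hc.trans ht.1)⟩

lemma ray_dist {X : Type*} [MetricSpace X] {v : X} {α : ℝ → X}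
    (hα : IsGeodesicRayFrom v α) {s t : ℝ} (hs : 0 ≤ s) (hst : s ≤ t) :
    dist (α s) (α t) = t - s := by
  rw [hα.2 s t hs (hs.trans hst), abs_of_nonpos (by linarith)]
  ring

lemma ray_dist_v {X : Type*} [MetricSpace X] {v : X} {α : ℝ → X}
    (hα : IsGeodesicRayFrom v α) {t : ℝ} (ht : 0 ≤ t) :
    dist v (α t) = t := by
  have := ray_dist hα (le_refl 0) ht
  rw [hα.1] at this
  simpa using this

lemma far_mid {X : Type*} [MetricSpace X]
    {δ : ℝ} (hδ : 0 ≤ δ) (hgeo : GeodesicSpace X) (hslim : SlimTriangles X δ)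
    {v : X} {γ : ℝ → X} {D D' R : ℝ} (hD : 0 ≤ D) (hD' : 0 ≤ D') (hR : 0 ≤ R)
    {β : ℝ → X} (hβ : IsGeodesicRayFrom v β)
    (hβfar : ∀ u : ℝ, 0 ≤ u → Metric.infDist (β u) (Set.range γ) ≤ D)
    {s₂ s₃ u₂ u₃ : ℝ} (hu₂ : 0 ≤ u₂) (hu₃ : 0 ≤ u₃)
    (hb₂ : dist (γ s₂) (β u₂) ≤ D') (hb₃ : dist (γ s₃) (β u₃) ≤ D')
    {α : ℝ → X} (hα : IsGeodesicRayFrom v α)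
    {t₂ t₁ t₃ : ℝ} (ht₂ : 0 ≤ t₂) (h12 : t₂ ≤ t₁) (h13 : t₁ ≤ t₃)
    (ha₂ : dist (α t₂) (γ s₂) ≤ R) (ha₃ : dist (α t₃) (γ s₃) ≤ R)
    (hgap₂ : R + 2*δ < t₁ - t₂) (hgap₃ : R + 2*δ < t₃ - t₁) :
    Metric.infDist (α t₁) (Set.range γ) ≤ D + D' + 4*δ := by
  have ht₃ : 0 ≤ t₃ := le_trans (le_trans ht₂ h12) h13
  have ht₁ : 0 ≤ t₁ := le_trans ht₂ h12
  -- the six geodesics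
  obtain ⟨k, kc, kd, hk⟩ := hgeo (α t₃) (γ s₂)
  obtain ⟨h₁, e₁, e₁', hh₁⟩ := hgeo (α t₂) (γ s₂)
  obtain ⟨σ, sc, sd, hσ⟩ := hgeo (γ s₂) (γ s₃)
  obtain ⟨h₃, e₃, e₃', hh₃⟩ := hgeo (α t₃) (γ s₃)
  obtain ⟨g₃, f₃, f₃', hg₃⟩ := hgeo (γ s₃) (β u₃)
  obtain ⟨η, ec, ed, hη⟩ := hgeo (γ s₂) (β u₃)
  obtain ⟨g₂, f₂, f₂', hg₂⟩ := hgeo (γ s₂) (β u₂)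
  -- β-segment from β u₃ to β u₂, whose points are all on the ray
  obtain ⟨bs, bc, bd, hbs, hbsimg⟩ :
      ∃ (bs : ℝ → X) (bc bd : ℝ), GeodesicFrom bs bc bd (β u₃) (β u₂) ∧
        ∀ q ∈ bs '' Set.Icc bc bd, ∃ w, 0 ≤ w ∧ q = β w := by
    rcases le_total u₂ u₃ with h | h
    · refine ⟨fun t => β (u₂ + u₃ - t), u₂, u₃, (ray_seg hβ hu₂ h).rev, ?_⟩
      rintro q ⟨w, hw, rfl⟩
      exact ⟨u₂ + u₃ - w, by linarith [hw.2, hu₂], rfl⟩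
    · refine ⟨β, u₃, u₂, ray_seg hβ hu₃ h, ?_⟩
      rintro q ⟨w, hw, rfl⟩
      exact ⟨w, le_trans hu₃ hw.1, rfl⟩
  -- T1 : triangle (α t₂) (α t₃) (γ s₂)
  have hf1 : GeodesicFrom α t₂ t₃ (α t₂) (α t₃) := ray_seg hα ht₂ (h12.trans h13)
  obtain ⟨q, hq, hdq⟩ :=
    (hslim (α t₂) (α t₃) (γ s₂) α t₂ t₃ k kc kd h₁ e₁ e₁' hf1 hk hh₁).1 t₁ ⟨h12, h13⟩
  rcases hq with hq | hq
  swap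
  · -- q on the short side h₁ : contradiction
    have h1 : dist q (α t₂) ≤ dist (α t₂) (γ s₂) := hh₁.dist_left hq
    have h2 : dist (α t₁) (α t₂) = t₁ - t₂ := by
      rw [hα.2 t₁ t₂ ht₁ ht₂, abs_of_nonneg (by linarith)]
    have := dist_triangle (α t₁) q (α t₂)
    linarith
  -- T2 : triangle (α t₃) (γ s₂) (γ s₃), q lies on side k
  obtain ⟨w, hw, rfl⟩ := hq
  obtain ⟨z₁, hz₁, hdz⟩ :=
    (hslim (α t₃) (γ s₂) (γ s₃) k kc kd σ sc sd h₃ e₃ e₃' hk hσ hh₃).1 w hw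
  rcases hz₁ with hz₁ | hz₁
  swap
  · -- z₁ on the short side h₃ : contradiction
    have h1 : dist z₁ (α t₃) ≤ dist (α t₃) (γ s₃) := hh₃.dist_left hz₁
    have h2 : dist (α t₁) (α t₃) = t₃ - t₁ := ray_dist hα ht₁ h13
    have t1 := dist_triangle (α t₁) (k w) z₁
    have t2 := dist_triangle (α t₁) z₁ (α t₃)
    linarith
  -- now dist (α t₁) z₁ ≤ 2δ with z₁ on σ
  have hz₁d : dist (α t₁) z₁ ≤ 2*δ := by
    have := dist_triangle (α t₁) (k w) z₁
    linarith
  -- T3 : triangle (γ s₂) (γ s₃) (β u₃), z₁ on σ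
  obtain ⟨w', hw', rfl⟩ := hz₁
  obtain ⟨m, hm, hdm⟩ :=
    (hslim (γ s₂) (γ s₃) (β u₃) σ sc sd g₃ f₃ f₃' η ec ed hσ hg₃ hη).1 w' hw'
  have key : Metric.infDist (σ w') (Set.range γ) ≤ D + D' + 2*δ := by
    rcases hm with hm | hm
    · -- m on the short side g₃ from γ s₃ to β u₃
      have h1 : dist m (γ s₃) ≤ dist (γ s₃) (β u₃) := hg₃.dist_left hm
      have h2 : Metric.infDist (σ w') (Set.range γ) ≤ dist (σ w') (γ s₃) :=
        Metric.infDist_le_dist_of_mem ⟨s₃, rfl⟩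
      have := dist_triangle (σ w') m (γ s₃)
      linarith
    -- T4 : triangle (γ s₂) (β u₃) (β u₂), m on side η
    obtain ⟨w₂, hw₂, rfl⟩ := hm
    obtain ⟨m₂, hm₂, hdm₂⟩ :=
      (hslim (γ s₂) (β u₃) (β u₂) η ec ed bs bc bd g₂ f₂ f₂' hη hbs hg₂).1 w₂ hw₂
    rcases hm₂ with hm₂ | hm₂
    · -- m₂ is a point of the β ray
      obtain ⟨wβ, hwβ, rfl⟩ := hbsimg m₂ hm₂
      have h1 : Metric.infDist (β wβ) (Set.range γ) ≤ D := hβfar wβ hwβ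
      have h2 := Metric.infDist_le_infDist_add_dist (x := σ w') (y := η w₂)
        (s := Set.range γ)
      have h3 := Metric.infDist_le_infDist_add_dist (x := η w₂) (y := β wβ)
        (s := Set.range γ)
      linarith
    · -- m₂ on the short side g₂ from γ s₂ to β u₂
      have h1 : dist m₂ (γ s₂) ≤ dist (γ s₂) (β u₂) := hg₂.dist_left hm₂
      have h2 : Metric.infDist (σ w') (Set.range γ) ≤ dist (σ w') (γ s₂) :=
        Metric.infDist_le_dist_of_mem ⟨s₂, rfl⟩
      have t1 := dist_triangle (σ w') (η w₂) m₂
      have t2 := dist_triangle (σ w') m₂ (γ s₂)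
      linarith
  have := Metric.infDist_le_infDist_add_dist (x := α t₁) (y := σ w') (s := Set.range γ)
  have hd' : dist (α t₁) (σ w') ≤ 2*δ := hz₁d
  linarith

lemma track {X : Type*} [MetricSpace X]
    {v : X} {lam ε : ℝ} (hlam : 1 ≤ lam) (hε : 0 ≤ ε)
    {γ : ℝ → X}
    (hγ : ∀ s t : ℝ, lam⁻¹ * |s - t| - ε ≤ dist (γ s) (γ t) ∧
      dist (γ s) (γ t) ≤ lam * |s - t| + ε)
    {D : ℝ} (hD : 0 ≤ D)
    {β : ℝ → X} (hβ : IsGeodesicRayFrom v β)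
    (hβfar : ∀ u : ℝ, 0 ≤ u → Metric.infDist (β u) (Set.range γ) ≤ D) :
    ∃ (ς S₀ D' : ℝ), (ς = 1 ∨ ς = -1) ∧ 0 ≤ D' ∧
      (∀ s : ℝ, S₀ ≤ ς * s → ∃ u, 0 ≤ u ∧ dist (γ s) (β u) ≤ D') ∧
      (∀ T : ℝ, ∃ U : ℝ, ∀ u : ℝ, U ≤ u → ∃ s, dist (β u) (γ s) ≤ D + 2 ∧ T ≤ ς * s) := by
  have hlam0 : (0:ℝ) < lam := lt_of_lt_of_le one_pos hlam
  have hne : (Set.range γ).Nonempty := ⟨γ 0, 0, rfl⟩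
  -- choose tracking parameters σ n
  have hchoice : ∀ n : ℕ, ∃ s : ℝ, dist (β n) (γ s) ≤ D + 1 := by
    intro n
    have h1 : Metric.infDist (β n) (Set.range γ) < D + 1 :=
      lt_of_le_of_lt (hβfar n (Nat.cast_nonneg n)) (by linarith)
    obtain ⟨y, ⟨s, rfl⟩, hy⟩ := (Metric.infDist_lt_iff hne).1 h1
    exact ⟨s, le_of_lt hy⟩
  choose σ hσ using hchoice
  -- basic quasi-geodesic parameter estimate
  have qg_par : ∀ a b B : ℝ, dist (γ a) (γ b) ≤ B → |a - b| ≤ lam * (B + ε) := by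
    intro a b B hab
    have h1 := (hγ a b).1
    have h2 : lam⁻¹ * |a - b| ≤ B + ε := by linarith
    calc |a - b| = lam * (lam⁻¹ * |a - b|) := by field_simp
    _ ≤ lam * (B + ε) := mul_le_mul_of_nonneg_left h2 (le_of_lt hlam0)
  set c₀ : ℝ := 2*(D+1) + ε with hc₀
  have hc₀0 : 0 ≤ c₀ := by positivity
  set step : ℝ := lam * (1 + c₀) with hstepdef
  have hstep0 : 0 < step := by positivity
  -- adjacent steps
  have F1 : ∀ n : ℕ, |σ (n+1) - σ n| ≤ step := by
    intro n
    have hb : dist (β (n+1:ℕ)) (β n) = 1 := by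
      rw [hβ.2 _ _ (Nat.cast_nonneg _) (Nat.cast_nonneg _)]
      push_cast; simp
    have hdist : dist (γ (σ (n+1))) (γ (σ n)) ≤ 1 + 2*(D+1) := by
      have t1 := dist_triangle (γ (σ (n+1))) (β (n+1:ℕ)) (γ (σ n))
      have t2 := dist_triangle (β (n+1:ℕ)) (β n) (γ (σ n))
      have e1 := hσ (n+1)
      have e2 := hσ n
      rw [dist_comm (γ (σ (n+1))) (β (n+1:ℕ))] at t1
      linarith
    have := qg_par _ _ _ hdist
    calc |σ (n+1) - σ n| ≤ lam * ((1 + 2*(D+1)) + ε) := this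
    _ = step := by rw [hstepdef, hc₀]; ring
  -- growth from σ 0
  have GROW : ∀ n : ℕ, ((n:ℝ) - c₀)/lam - |σ 0| ≤ |σ n| := by
    intro n
    have hb : dist (β (n:ℕ)) (β 0) = (n:ℝ) := by
      rw [hβ.2 _ _ (Nat.cast_nonneg _) le_rfl]
      simp
    have hlow : (n:ℝ) - 2*(D+1) ≤ dist (γ (σ n)) (γ (σ 0)) := by
      have t1 := dist_triangle (β (n:ℕ)) (γ (σ n)) (β (0:ℝ))
      have t2 := dist_triangle (γ (σ n)) (γ (σ 0)) (β (0:ℝ))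
      have e1 := hσ n
      have e2 : dist (γ (σ 0)) (β 0) ≤ D + 1 := by
        rw [dist_comm]
        simpa using hσ 0
      have t1' : dist (β (n:ℕ)) (β 0) ≤ dist (β (n:ℕ)) (γ (σ n)) + dist (γ (σ n)) (β 0) := t1
      linarith [t1', t2, e1, e2, hb]
    have hup := (hγ (σ n) (σ 0)).2
    have h1 : (n:ℝ) - c₀ ≤ lam * |σ n - σ 0| := by rw [hc₀]; linarith
    have h2 : ((n:ℝ) - c₀)/lam ≤ |σ n - σ 0| := by
      rw [div_le_iff₀ hlam0]; linarith [h1]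
    have h3 : |σ n - σ 0| ≤ |σ n| + |σ 0| := abs_sub _ _
    linarith
  -- threshold beyond which |σ n| > step, with constant sign
  set N₀ : ℕ := ⌈lam * (step + |σ 0|) + c₀⌉₊ + 1 with hN₀
  have hN₀big : ∀ n : ℕ, N₀ ≤ n → step < |σ n| := by
    intro n hn
    have h1 : lam * (step + |σ 0|) + c₀ ≤ (⌈lam * (step + |σ 0|) + c₀⌉₊ : ℝ) :=
      Nat.le_ceil _
    have h2 : (N₀ : ℝ) ≤ (n : ℝ) := Nat.cast_le.2 hn
    have h3 : lam * (step + |σ 0|) + c₀ + 1 ≤ (n:ℝ) := by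
      rw [hN₀] at h2; push_cast at h2; linarith
    have h4 := GROW n
    have h5 : step + |σ 0| + 1/lam ≤ ((n:ℝ) - c₀)/lam := by
      rw [le_div_iff₀ hlam0]; field_simp; nlinarith
    have h6 : 0 < 1/lam := by positivity
    linarith
  set ς : ℝ := if 0 < σ N₀ then 1 else -1 with hςdef
  have hςor : ς = 1 ∨ ς = -1 := by rw [hςdef]; split <;> simp
  have hςabs : ∀ x : ℝ, ς * x ≤ |x| ∧ -|x| ≤ ς * x := by
    intro x
    rcases hςor with h | h <;> rw [h]
    · simpa using ⟨le_abs_self x, neg_abs_le x⟩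
    · rw [neg_one_mul]
      exact ⟨neg_le_abs x, neg_le_neg (le_abs_self x)⟩
  -- constant sign beyond N₀
  have hsign : ∀ n : ℕ, N₀ ≤ n → ς * σ n = |σ n| := by
    intro n hn
    induction n, hn using Nat.le_induction with
    | base =>
      rcases lt_or_ge 0 (σ N₀) with h | h
      · rw [hςdef, if_pos h, one_mul, abs_of_pos h]
      · have hb := hN₀big N₀ (le_refl _)
        have hneg : σ N₀ < 0 := by
          rcases lt_or_eq_of_le h with h' | h'
          · exact h'
          · exfalso; rw [h'] at hb; simp at hb; linarith
        rw [hςdef, if_neg (not_lt.2 h), neg_one_mul, abs_of_neg hneg]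
    | succ n hn ih =>
      have h1 : step < |σ n| := hN₀big n hn
      have h2 := F1 n
      have h3 : ς * σ (n+1) = ς * σ n + ς * (σ (n+1) - σ n) := by ring
      have h4 := (hςabs (σ (n+1) - σ n)).2
      have h5 : 0 < ς * σ (n+1) := by rw [h3, ih]; linarith
      have h6 : |ς * σ (n+1)| = |σ (n+1)| := by
        rcases hςor with h | h <;> rw [h] <;> simp
      rw [← h6, abs_of_pos h5]
  set S₀ : ℝ := ς * σ N₀ with hS₀
  set D' : ℝ := lam * step + ε + (D + 1) with hD'
  have hD'0 : 0 ≤ D' := by positivity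
  refine ⟨ς, S₀, D', hςor, hD'0, ?_, ?_⟩
  · -- density
    intro s hs
    have hex : ∃ n : ℕ, N₀ ≤ n ∧ ς * s ≤ ς * σ n := by
      set n₁ : ℕ := max N₀ ⌈lam * (ς * s + |σ 0|) + c₀⌉₊ with hn₁
      refine ⟨n₁, le_max_left _ _, ?_⟩
      have h1 : lam * (ς * s + |σ 0|) + c₀ ≤ (n₁ : ℝ) := by
        calc lam * (ς * s + |σ 0|) + c₀ ≤ (⌈lam * (ς * s + |σ 0|) + c₀⌉₊ : ℝ) :=
          Nat.le_ceil _
        _ ≤ (n₁ : ℝ) := Nat.cast_le.2 (le_max_right _ _)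
      have h2 := GROW n₁
      have h3 : ς * s + |σ 0| ≤ ((n₁:ℝ) - c₀)/lam := by
        rw [le_div_iff₀ hlam0]; nlinarith
      have h4 : ς * σ n₁ = |σ n₁| := hsign n₁ (le_max_left _ _)
      linarith
    set n := Nat.find hex with hnfind
    obtain ⟨hnN₀, hns⟩ := Nat.find_spec hex
    have hupper : ς * σ n ≤ ς * s + step := by
      rcases Nat.lt_or_ge N₀ n with h | h
      · have hmlt : n - 1 < n := by omega
        have hmin := Nat.find_min hex hmlt
        have hm : ¬ (N₀ ≤ n - 1 ∧ ς * s ≤ ς * σ (n-1)) := hmin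
        have hmN₀ : N₀ ≤ n - 1 := by omega
        have hmlt' : ς * σ (n-1) < ς * s := by
          by_contra hcon
          exact hm ⟨hmN₀, le_of_not_gt hcon⟩
        have hsucc : n - 1 + 1 = n := by omega
        have hF := F1 (n-1)
        rw [hsucc] at hF
        have h4 : ς * σ n - ς * σ (n-1) = ς * (σ n - σ (n-1)) := by ring
        have h5 := (hςabs (σ n - σ (n-1))).1
        linarith
      · have : n = N₀ := le_antisymm h hnN₀
        rw [this]; rw [← hS₀] at *; linarith [hstep0.le, hs]
    -- |σ n - s| ≤ step
    have habs : |σ n - s| ≤ step := by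
      have h6 : |ς * σ n - ς * s| = |σ n - s| := by
        have : ς * σ n - ς * s = ς * (σ n - s) := by ring
        rw [this]
        rcases hςor with h | h <;> rw [h] <;> simp [neg_one_mul, abs_sub_comm]
      rw [← h6, abs_le]
      constructor <;> linarith
    have hdist : dist (γ s) (γ (σ n)) ≤ lam * step + ε := by
      have := (hγ s (σ n)).2
      have h7 : |s - σ n| ≤ step := by rw [abs_sub_comm]; exact habs
      nlinarith
    refine ⟨(n:ℝ), Nat.cast_nonneg n, ?_⟩
    have t1 := dist_triangle (γ s) (γ (σ n)) (β (n:ℕ))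
    have e1 := hσ n
    rw [dist_comm (β (n:ℕ)) (γ (σ n))] at e1
    rw [hD']
    linarith
  · -- tracking
    intro T
    refine ⟨max (N₀:ℝ) (lam * (T + |σ 0|) + c₀) + 1, ?_⟩
    intro u hu
    have hu0 : 0 ≤ u := by
      have : (0:ℝ) ≤ (N₀:ℝ) := Nat.cast_nonneg _
      have h2 := le_max_left (N₀:ℝ) (lam * (T + |σ 0|) + c₀)
      linarith
    set n : ℕ := ⌊u⌋₊ with hn
    have hn1 : (n:ℝ) ≤ u := Nat.floor_le hu0
    have hn2 : u < (n:ℝ) + 1 := Nat.lt_floor_add_one u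
    have hnN₀ : N₀ ≤ n := by
      have h1 : (N₀:ℝ) ≤ max (N₀:ℝ) (lam * (T + |σ 0|) + c₀) := le_max_left _ _
      have h2 : (N₀:ℝ) ≤ (n:ℝ) := by linarith
      exact_mod_cast h2
    have hsgn : ς * σ n = |σ n| := hsign n hnN₀
    have hlarge : T ≤ ς * σ n := by
      have h1 : lam * (T + |σ 0|) + c₀ ≤ (n:ℝ) := by
        have := le_max_right (N₀:ℝ) (lam * (T + |σ 0|) + c₀)
        linarith
      have h2 := GROW n
      have h3 : T + |σ 0| ≤ ((n:ℝ) - c₀)/lam := by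
        rw [le_div_iff₀ hlam0]; nlinarith
      linarith
    refine ⟨σ n, ?_, hlarge⟩
    have hbu : dist (β u) (β (n:ℕ)) = u - (n:ℝ) := by
      rw [hβ.2 _ _ hu0 (Nat.cast_nonneg _), abs_of_nonneg (by linarith)]
    have t1 := dist_triangle (β u) (β (n:ℕ)) (γ (σ n))
    have e1 := hσ n
    linarith

lemma tail_far {X Bd : Type*} [MetricSpace X]
    (δ : ℝ) (hδ : 0 ≤ δ) (hgeo : GeodesicSpace X) (hslim : SlimTriangles X δ)
    (v : X) (ept : (ℝ → X) → Bd)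
    (hsurj : ∀ p : Bd, ∃ α : ℝ → X, IsGeodesicRayFrom v α ∧ ept α = p)
    (hept : ∀ α β : ℝ → X, IsGeodesicRayFrom v α → IsGeodesicRayFrom v β →
      (ept α = ept β ↔ ∃ K : ℝ, ∀ t : ℝ, 0 ≤ t → dist (α t) (β t) ≤ K))
    (lam ε : ℝ) (hlam : 1 ≤ lam) (hε : 0 ≤ ε)
    (γ : ℝ → X)
    (hγ : ∀ s t : ℝ, lam⁻¹ * |s - t| - ε ≤ dist (γ s) (γ t) ∧
      dist (γ s) (γ t) ≤ lam * |s - t| + ε)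
    (pPlus pMinus : Bd) (hpm : pPlus ≠ pMinus)
    (hends : ∀ α : ℝ → X, IsGeodesicRayFrom v α →
      ((ept α = pPlus ∨ ept α = pMinus) ↔
        ∃ K : ℝ, ∀ t : ℝ, 0 ≤ t → Metric.infDist (α t) (Set.range γ) ≤ K))
    (D r : ℝ) (hD : 0 ≤ D) (hr : D < r)
    (hMorse : ∀ α : ℝ → X, IsGeodesicRayFrom v α → (ept α = pPlus ∨ ept α = pMinus) →
      ∀ t : ℝ, 0 ≤ t → Metric.infDist (α t) (Set.range γ) ≤ D) :
    ∀ α : ℝ → X, IsGeodesicRayFrom v α → ept α ≠ pPlus → ept α ≠ pMinus →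
      ∃ t₀ : ℝ, 0 ≤ t₀ ∧ ∀ t, t₀ ≤ t → r ≤ Metric.infDist (α t) (Set.range γ) := by
  intro α hα hp1 hp2
  have hr0 : 0 ≤ r := le_of_lt (lt_of_le_of_lt hD hr)
  have hne : (Set.range γ).Nonempty := ⟨γ 0, 0, rfl⟩
  -- unboundedness of the distance to γ along α
  have hunb : ∀ K : ℝ, ∃ t, 0 ≤ t ∧ K < Metric.infDist (α t) (Set.range γ) := by
    have hno : ¬ (ept α = pPlus ∨ ept α = pMinus) := by tauto
    have h1 : ¬ ∃ K : ℝ, ∀ t : ℝ, 0 ≤ t → Metric.infDist (α t) (Set.range γ) ≤ K :=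
      fun h => hno ((hends α hα).2 h)
    push_neg at h1
    exact h1
  by_contra hcon
  push_neg at hcon
  -- dips below r at arbitrarily large times
  have hdip : ∀ T : ℝ, ∃ t, 0 ≤ t ∧ T ≤ t ∧ ∃ s, dist (α t) (γ s) < r := by
    intro T
    obtain ⟨t, ht, hlt⟩ := hcon (max T 0) (le_max_right _ _)
    obtain ⟨y, ⟨s, rfl⟩, hy⟩ := (Metric.infDist_lt_iff hne).1 hlt
    exact ⟨t, le_trans (le_max_right _ _) ht, le_trans (le_max_left _ _) ht, s, hy⟩
  -- the two Morse rays
  obtain ⟨βp, hβp, hβpe⟩ := hsurj pPlus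
  obtain ⟨βm, hβm, hβme⟩ := hsurj pMinus
  have hβpfar : ∀ u : ℝ, 0 ≤ u → Metric.infDist (βp u) (Set.range γ) ≤ D :=
    fun u hu => hMorse βp hβp (Or.inl hβpe) u hu
  have hβmfar : ∀ u : ℝ, 0 ≤ u → Metric.infDist (βm u) (Set.range γ) ≤ D :=
    fun u hu => hMorse βm hβm (Or.inr hβme) u hu
  obtain ⟨ςp, Sp, D'p, hςpor, hD'p0, hdensp, htrackp⟩ := track hlam hε hγ hD hβp hβpfar
  obtain ⟨ςm, Sm, D'm, hςmor, hD'm0, hdensm, htrackm⟩ := track hlam hε hγ hD hβm hβmfar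
  -- the two rays follow γ in opposite directions
  have hop : ςp ≠ ςm := by
    intro heq
    have hbound : ∃ K : ℝ, ∀ t : ℝ, 0 ≤ t → dist (βp t) (βm t) ≤ K := by
      obtain ⟨U, hU⟩ := htrackp Sm
      set U₀ : ℝ := max U 0 with hU₀
      set B : ℝ := D + 2 + D'm with hB
      refine ⟨max (2*U₀) (2*B), ?_⟩
      intro t ht
      rcases le_total t U₀ with hc | hc
      · have h1 : dist (βp t) (βm t) ≤ dist (βp t) v + dist v (βm t) := dist_triangle _ _ _
        have h2 : dist v (βp t) = t := ray_dist_v hβp ht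
        have h3 : dist v (βm t) = t := ray_dist_v hβm ht
        rw [dist_comm] at h2
        have := le_max_left (2*U₀) (2*B)
        linarith
      · obtain ⟨s, hs1, hs2⟩ := hU t (le_trans (le_max_left _ _) hc)
        rw [heq] at hs2
        obtain ⟨m, hm0, hmd⟩ := hdensm s hs2
        have h1 : dist (βp t) (βm m) ≤ B := by
          have := dist_triangle (βp t) (γ s) (βm m)
          rw [hB]; linarith [hmd, hs1]
        have h2 : |t - m| ≤ B := by
          have h3 := abs_dist_sub_le (βp t) (βm m) v
          have h4 : dist (βp t) v = t := by rw [dist_comm]; exact ray_dist_v hβp ht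
          have h5 : dist (βm m) v = m := by rw [dist_comm]; exact ray_dist_v hβm hm0
          rw [h4, h5] at h3
          exact le_trans h3 h1
        have h6 : dist (βm m) (βm t) = |m - t| := hβm.2 m t hm0 ht
        have h7 := dist_triangle (βp t) (βm m) (βm t)
        have h8 : |m - t| ≤ B := by rw [abs_sub_comm]; exact h2
        have := le_max_right (2*U₀) (2*B)
        linarith
    have : ept βp = ept βm := (hept βp βm hβp hβm).2 hbound
    exact hpm (by rw [← hβpe, ← hβme, this])
  -- core argument, for a ray tracking the matching direction
  have hmain : ∀ (β : ℝ → X), IsGeodesicRayFrom v β →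
      (∀ u : ℝ, 0 ≤ u → Metric.infDist (β u) (Set.range γ) ≤ D) →
      ∀ (ς S₀ D' : ℝ), (ς = 1 ∨ ς = -1) → 0 ≤ D' →
      (∀ s : ℝ, S₀ ≤ ς * s → ∃ u, 0 ≤ u ∧ dist (γ s) (β u) ≤ D') →
      (∀ T : ℝ, ∃ t, 0 ≤ t ∧ T ≤ t ∧ ∃ s, dist (α t) (γ s) < r ∧ 0 ≤ ς * s) →
      False := by
    intro β hβ hβfar ς S₀ D' hςor hD'0 hdens hdipς
    set dv0 : ℝ := dist v (γ 0) with hdv0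
    have hdv00 : 0 ≤ dv0 := dist_nonneg
    set Tstar : ℝ := lam * (|S₀| + 1) + dv0 + ε + r with hTstar
    -- a dip at time ≥ Tstar has parameter with S₀ ≤ ς * s
    have hparam : ∀ t s : ℝ, 0 ≤ t → Tstar ≤ t → dist (α t) (γ s) < r → 0 ≤ ς * s →
        S₀ ≤ ς * s := by
      intro t s ht hTt hdist hςs
      have h1 : dist v (α t) = t := ray_dist_v hα ht
      have h2 : dist v (α t) ≤ dist v (γ 0) + dist (γ 0) (γ s) + dist (γ s) (α t) :=
        dist_triangle4 _ _ _ _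
      have h3 : dist (γ 0) (γ s) ≤ lam * |0 - s| + ε := (hγ 0 s).2
      have h4 : |0 - s| = |s| := by rw [zero_sub, abs_neg]
      rw [dist_comm (γ s) (α t)] at h2
      have h5 : t ≤ dv0 + (lam * |s| + ε) + r := by
        rw [h4] at h3; rw [h1] at h2; linarith
      have h6 : lam * (|S₀| + 1) ≤ lam * |s| := by
        rw [hTstar] at hTt; linarith
      have h7 : |S₀| + 1 ≤ |s| := by
        have hlam0 : (0:ℝ) < lam := lt_of_lt_of_le one_pos hlam
        exact le_of_mul_le_mul_left h6 hlam0
      have h8 : ς * s = |s| := by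
        have h9 : |ς * s| = |s| := by
          rcases hςor with h | h <;> rw [h] <;> simp
        rw [← h9, abs_of_nonneg hςs]
      rw [h8]
      calc S₀ ≤ |S₀| := le_abs_self _
      _ ≤ |s| := by linarith
    -- first dip
    obtain ⟨t₂, ht₂0, ht₂T, s₂, hs₂d, hs₂ς⟩ := hdipς Tstar
    obtain ⟨u₂, hu₂0, hu₂d⟩ := hdens s₂ (hparam t₂ s₂ ht₂0 ht₂T hs₂d hs₂ς)
    set C : ℝ := D + D' + 4*δ with hC
    have hC0 : 0 ≤ C := by rw [hC]; linarith
    set M : ℝ := C + t₂ + 2*r + 2*δ + 1 with hM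
    -- peak
    obtain ⟨t₁, ht₁0, ht₁M⟩ := hunb M
    -- Lipschitz property of infDist along the ray
    have hlip : ∀ a b : ℝ, 0 ≤ a → 0 ≤ b →
        Metric.infDist (α a) (Set.range γ) ≤ Metric.infDist (α b) (Set.range γ) + |a - b| := by
      intro a b ha hb
      have := Metric.infDist_le_infDist_add_dist (x := α a) (y := α b) (s := Set.range γ)
      rw [hα.2 a b ha hb] at this
      exact this
    have hd₂ : Metric.infDist (α t₂) (Set.range γ) < r :=
      lt_of_le_of_lt (Metric.infDist_le_dist_of_mem ⟨s₂, rfl⟩) hs₂d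
    have h12 : t₂ < t₁ := by
      by_contra hcc
      push_neg at hcc
      have h1 := hlip t₁ t₂ ht₁0 ht₂0
      have h2 : |t₁ - t₂| ≤ t₂ := by rw [abs_of_nonpos (by linarith)]; linarith
      rw [hM] at ht₁M
      linarith
    have hgap₂ : r + 2*δ < t₁ - t₂ := by
      have h1 := hlip t₁ t₂ ht₁0 ht₂0
      have h2 : |t₁ - t₂| = t₁ - t₂ := abs_of_pos (by linarith)
      rw [h2] at h1
      rw [hM] at ht₁M
      linarith
    -- second dip
    obtain ⟨t₃, ht₃0, ht₃T, s₃, hs₃d, hs₃ς⟩ := hdipς (max Tstar (t₁ + 1))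
    have ht₃T' : Tstar ≤ t₃ := le_trans (le_max_left _ _) ht₃T
    have h13 : t₁ < t₃ := by
      have := le_trans (le_max_right _ _) ht₃T
      linarith
    obtain ⟨u₃, hu₃0, hu₃d⟩ := hdens s₃ (hparam t₃ s₃ ht₃0 ht₃T' hs₃d hs₃ς)
    have hd₃ : Metric.infDist (α t₃) (Set.range γ) < r :=
      lt_of_le_of_lt (Metric.infDist_le_dist_of_mem ⟨s₃, rfl⟩) hs₃d
    have hgap₃ : r + 2*δ < t₃ - t₁ := by
      have h1 := hlip t₁ t₃ ht₁0 ht₃0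
      have h2 : |t₁ - t₃| = t₃ - t₁ := by rw [abs_of_neg (by linarith)]; ring
      rw [h2] at h1
      rw [hM] at ht₁M
      linarith
    -- the slim-triangle estimate
    have hfar := far_mid hδ hgeo hslim hD hD'0 hr0 hβ hβfar hu₂0 hu₃0 hu₂d hu₃d hα
      ht₂0 (le_of_lt h12) (le_of_lt h13) (le_of_lt hs₂d) (le_of_lt hs₃d) hgap₂ hgap₃
    rw [← hC] at hfar
    rw [hM] at ht₁M
    linarith
  -- split according to the side of the dips
  have hsplit : (∀ T : ℝ, ∃ t, 0 ≤ t ∧ T ≤ t ∧ ∃ s, dist (α t) (γ s) < r ∧ 0 ≤ s) ∨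
      (∀ T : ℝ, ∃ t, 0 ≤ t ∧ T ≤ t ∧ ∃ s, dist (α t) (γ s) < r ∧ s ≤ 0) := by
    by_contra h
    push_neg at h
    obtain ⟨⟨T₁, hT₁⟩, ⟨T₂, hT₂⟩⟩ := h
    obtain ⟨t, ht0, htT, s, hs⟩ := hdip (max T₁ T₂)
    have c1 := hT₁ t ht0 (le_trans (le_max_left _ _) htT) s hs
    have c2 := hT₂ t ht0 (le_trans (le_max_right _ _) htT) s hs
    linarith
  rcases hsplit with hside | hside
  · -- dips on the positive side : need the ray with ς = 1
    have hdip1 : ∀ (ς : ℝ), ς = 1 →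
        ∀ T : ℝ, ∃ t, 0 ≤ t ∧ T ≤ t ∧ ∃ s, dist (α t) (γ s) < r ∧ 0 ≤ ς * s := by
      intro ς hς T
      obtain ⟨t, h1, h2, s, h3, h4⟩ := hside T
      exact ⟨t, h1, h2, s, h3, by rw [hς, one_mul]; exact h4⟩
    rcases hςpor with h1 | h1
    · exact hmain βp hβp hβpfar ςp Sp D'p (Or.inl h1) hD'p0 hdensp (hdip1 ςp h1)
    · rcases hςmor with h2 | h2
      · exact hmain βm hβm hβmfar ςm Sm D'm (Or.inl h2) hD'm0 hdensm (hdip1 ςm h2)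
      · exact hop (by rw [h1, h2])
  · -- dips on the negative side : need the ray with ς = -1
    have hdip1 : ∀ (ς : ℝ), ς = -1 →
        ∀ T : ℝ, ∃ t, 0 ≤ t ∧ T ≤ t ∧ ∃ s, dist (α t) (γ s) < r ∧ 0 ≤ ς * s := by
      intro ς hς T
      obtain ⟨t, h1, h2, s, h3, h4⟩ := hside T
      refine ⟨t, h1, h2, s, h3, ?_⟩
      rw [hς]; linarith
    rcases hςpor with h1 | h1
    · rcases hςmor with h2 | h2
      · exact hop (by rw [h1, h2])
      · exact hmain βm hβm hβmfar ςm Sm D'm (Or.inr h2) hD'm0 hdensm (hdip1 ςm h2)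
    · exact hmain βp hβp hβpfar ςp Sp D'p (Or.inr h1) hD'p0 hdensp (hdip1 ςp h1)

/-- Shadows of distinct connected components of `{x : d(x,γ) ≥ r}` (with `r` larger
than the Morse constant `D` of the bi-infinite quasi-geodesic `γ`) are disjoint, and
their union is the complement of the two endpoints of `γ` in the boundary. -/
theorem shadows_disjoint_and_cover
    {X Bd : Type*} [MetricSpace X] [ProperSpace X]
    (δ : ℝ) (hδ : 0 ≤ δ) (hgeo : GeodesicSpace X) (hslim : SlimTriangles X δ)
    (v : X) (ept : (ℝ → X) → Bd)
    (hsurj : ∀ p : Bd, ∃ α : ℝ → X, IsGeodesicRayFrom v α ∧ ept α = p)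
    (hept : ∀ α β : ℝ → X, IsGeodesicRayFrom v α → IsGeodesicRayFrom v β →
      (ept α = ept β ↔ ∃ K : ℝ, ∀ t : ℝ, 0 ≤ t → dist (α t) (β t) ≤ K))
    (lam ε : ℝ) (hlam : 1 ≤ lam) (hε : 0 ≤ ε)
    (γ : ℝ → X)
    (hγ : ∀ s t : ℝ, lam⁻¹ * |s - t| - ε ≤ dist (γ s) (γ t) ∧
      dist (γ s) (γ t) ≤ lam * |s - t| + ε)
    (pPlus pMinus : Bd) (hpm : pPlus ≠ pMinus)
    (hends : ∀ α : ℝ → X, IsGeodesicRayFrom v α →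
      ((ept α = pPlus ∨ ept α = pMinus) ↔
        ∃ K : ℝ, ∀ t : ℝ, 0 ≤ t → Metric.infDist (α t) (Set.range γ) ≤ K))
    (D r : ℝ) (hD : 0 ≤ D) (hr : D < r)
    (hMorse : ∀ α : ℝ → X, IsGeodesicRayFrom v α → (ept α = pPlus ∨ ept α = pMinus) →
      ∀ t : ℝ, 0 ≤ t → Metric.infDist (α t) (Set.range γ) ≤ D) :
    (∀ U U' : Set X,
      (∃ x ∈ farSet γ r, U = connectedComponentIn (farSet γ r) x) →
      (∃ x ∈ farSet γ r, U' = connectedComponentIn (farSet γ r) x) →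
      U ≠ U' → Disjoint (shadow v ept U) (shadow v ept U')) ∧
    (⋃ U ∈ {U : Set X | ∃ x ∈ farSet γ r, U = connectedComponentIn (farSet γ r) x},
      shadow v ept U) = ({pPlus, pMinus} : Set Bd)ᶜ := by
  have hr0 : 0 ≤ r := le_of_lt (lt_of_le_of_lt hD hr)
  set F : Set X := farSet γ r with hFdef
  have hmemF : ∀ x : X, x ∈ F ↔ r ≤ Metric.infDist x (Set.range γ) := fun x => Iff.rfl
  constructor
  · -- disjointness of shadows
    rintro U U' ⟨x, hx, rfl⟩ ⟨x', hx', rfl⟩ hne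
    rw [Set.disjoint_left]
    intro p hp hp'
    obtain ⟨α, hα, hαe⟩ := hsurj p
    obtain ⟨t₀, ht₀⟩ := hp α hα hαe
    obtain ⟨t₀', ht₀'⟩ := hp' α hα hαe
    have h1 : α (max t₀ t₀') ∈ connectedComponentIn F x := ht₀ _ (le_max_left _ _)
    have h2 : α (max t₀ t₀') ∈ connectedComponentIn F x' := ht₀' _ (le_max_right _ _)
    exact hne ((connectedComponentIn_eq h1).trans (connectedComponentIn_eq h2).symm)
  · -- the union of the shadows is the complement of the endpoints
    ext p
    simp only [Set.mem_iUnion, Set.mem_setOf_eq, Set.mem_compl_iff, Set.mem_insert_iff,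
      Set.mem_singleton_iff]
    constructor
    · rintro ⟨U, ⟨x, hx, rfl⟩, hp⟩
      rintro (rfl | rfl)
      · obtain ⟨α, hα, hαe⟩ := hsurj p
        obtain ⟨t₀, ht₀⟩ := hp α hα hαe
        have h1 : α (max t₀ 0) ∈ F :=
          connectedComponentIn_subset F x (ht₀ _ (le_max_left _ _))
        have h2 := hMorse α hα (Or.inl hαe) (max t₀ 0) (le_max_right _ _)
        have h3 : r ≤ Metric.infDist (α (max t₀ 0)) (Set.range γ) := h1
        linarith
      · obtain ⟨α, hα, hαe⟩ := hsurj p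
        obtain ⟨t₀, ht₀⟩ := hp α hα hαe
        have h1 : α (max t₀ 0) ∈ F :=
          connectedComponentIn_subset F x (ht₀ _ (le_max_left _ _))
        have h2 := hMorse α hα (Or.inr hαe) (max t₀ 0) (le_max_right _ _)
        have h3 : r ≤ Metric.infDist (α (max t₀ 0)) (Set.range γ) := h1
        linarith
    · intro hnp
      push_neg at hnp
      obtain ⟨hnp1, hnp2⟩ := hnp
      obtain ⟨α₀, hα₀, hα₀e⟩ := hsurj p
      have hL1 := tail_far δ hδ hgeo hslim v ept hsurj hept lam ε hlam hε γ hγ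
        pPlus pMinus hpm hends D r hD hr hMorse
      obtain ⟨t₀, ht₀0, ht₀⟩ := hL1 α₀ hα₀ (by rw [hα₀e]; exact hnp1)
        (by rw [hα₀e]; exact hnp2)
      -- tail of a ray eventually in F lies in a single component
      have tail_cc : ∀ (αx : ℝ → X), IsGeodesicRayFrom v αx → ∀ (a : ℝ), 0 ≤ a →
          (∀ t, a ≤ t → r ≤ Metric.infDist (αx t) (Set.range γ)) →
          ∀ t, a ≤ t → αx t ∈ connectedComponentIn F (αx a) := by
        intro αx hαx a ha hfar t htt
        have hseg : GeodesicFrom αx a t (αx a) (αx t) := ray_seg hαx ha htt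
        have hconn := hseg.isPreconnected_image
        have hsub : αx '' Set.Icc a t ⊆ F := by
          rintro q ⟨w, hw, rfl⟩
          exact hfar w hw.1
        have hmem : αx a ∈ αx '' Set.Icc a t := ⟨a, ⟨le_refl a, htt⟩, rfl⟩
        exact hconn.subset_connectedComponentIn hmem hsub ⟨t, ⟨htt, le_refl t⟩, rfl⟩
      have hα₀F : α₀ t₀ ∈ F := ht₀ t₀ le_rfl
      refine ⟨connectedComponentIn F (α₀ t₀), ⟨α₀ t₀, hα₀F, rfl⟩, ?_⟩
      intro αx hαx hαxe
      obtain ⟨t₁, ht₁0, ht₁⟩ := hL1 αx hαx (by rw [hαxe]; exact hnp1)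
        (by rw [hαxe]; exact hnp2)
      refine ⟨t₁, fun t htt => ?_⟩
      have hmem1 : αx t ∈ connectedComponentIn F (αx t₁) := tail_cc αx hαx t₁ ht₁0 ht₁ t htt
      -- bridge between the two rays at a far time
      obtain ⟨K, hK⟩ := (hept α₀ αx hα₀ hαx).1 (by rw [hα₀e, hαxe])
      have hK0 : (0:ℝ) ≤ K := le_trans dist_nonneg (hK 0 le_rfl)
      -- unboundedness of infDist along α₀
      have hunb : ∀ Kk : ℝ, ∃ u, 0 ≤ u ∧ Kk < Metric.infDist (α₀ u) (Set.range γ) := by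
        have hno : ¬ (ept α₀ = pPlus ∨ ept α₀ = pMinus) := by
          rw [hα₀e]; tauto
        have h1 : ¬ ∃ Kk : ℝ, ∀ u : ℝ, 0 ≤ u → Metric.infDist (α₀ u) (Set.range γ) ≤ Kk :=
          fun h => hno ((hends α₀ hα₀).2 h)
        push_neg at h1
        exact h1
      obtain ⟨u, hu0, huB⟩ := hunb (r + K + t₀ + t₁ + Metric.infDist (α₀ 0) (Set.range γ))
      have hg0 : (0:ℝ) ≤ Metric.infDist (α₀ 0) (Set.range γ) := Metric.infDist_nonneg
      have hut : t₀ ≤ u ∧ t₁ ≤ u := by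
        have h1 := Metric.infDist_le_infDist_add_dist (x := α₀ u) (y := α₀ 0)
          (s := Set.range γ)
        have h2 : dist (α₀ u) (α₀ 0) = u := by
          rw [hα₀.2 u 0 hu0 le_rfl, sub_zero, abs_of_nonneg hu0]
        rw [h2] at h1
        constructor <;> linarith
      -- geodesic from α₀ u to αx u stays in F
      obtain ⟨f, a, b, hf⟩ := hgeo (α₀ u) (αx u)
      have hfF : f '' Set.Icc a b ⊆ F := by
        intro q hq
        have h1 : dist q (α₀ u) ≤ dist (α₀ u) (αx u) := hf.dist_left hq
        have h2 : dist (α₀ u) (αx u) ≤ K := hK u hu0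
        have h3 := Metric.infDist_le_infDist_add_dist (x := α₀ u) (y := q)
          (s := Set.range γ)
        rw [dist_comm (α₀ u) q] at h3
        show r ≤ Metric.infDist q (Set.range γ)
        linarith
      have hmemf1 : α₀ u ∈ f '' Set.Icc a b := ⟨a, ⟨le_refl a, hf.1⟩, hf.2.1⟩
      have hmemf2 : αx u ∈ f '' Set.Icc a b := ⟨b, ⟨hf.1, le_refl b⟩, hf.2.2.1⟩
      have hcc1 : αx u ∈ connectedComponentIn F (α₀ u) :=
        hf.isPreconnected_image.subset_connectedComponentIn hmemf1 hfF hmemf2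
      have heq1 : connectedComponentIn F (α₀ t₀) = connectedComponentIn F (α₀ u) :=
        connectedComponentIn_eq (tail_cc α₀ hα₀ t₀ ht₀0 ht₀ u hut.1)
      have heq2 : connectedComponentIn F (α₀ u) = connectedComponentIn F (αx u) :=
        connectedComponentIn_eq hcc1
      have heq3 : connectedComponentIn F (αx t₁) = connectedComponentIn F (αx u) :=
        connectedComponentIn_eq (tail_cc αx hαx t₁ ht₁0 ht₁ u hut.2)
      rw [heq1, heq2, ← heq3]
      exact hmem1
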